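/- Let K ≥ 1, f(1),…,f(K) > 0 with cdf F, and φ the discrete virtual values φ(k) = v_k − (v_{k+1}−v_k)(1−F(k))/f(k) (with φ(K) = v_K). Then there exist unique nonnegative reals τ(2),…,τ(K) (with conventions τ(1) = τ(K+1) = 0) such that the sequence φ̃(k) := φ(k) + τ(k)/f(k) − τ(k+1)/f(k) is non-decreasing in k and, on every maximal interval [l, r] where some τ is positive, φ̃ is constant and equals the f-weighted average (∑_{j=l}^{r} φ(j) f(j)) / (∑_{j=l}^{r} f(j)); moreover ∑_k φ̃(k) f(k) = ∑_k φ(k) f(k). -/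

import Mathlib

open Finset


private lemma sum_Icc_split (g : ℕ → ℝ) {a b c : ℕ} (hab : a ≤ b) (hbc : b ≤ c) :
    (∑ j ∈ Icc (a+1) b, g j) + ∑ j ∈ Icc (b+1) c, g j = ∑ j ∈ Icc (a+1) c, g j := by
  simp only [Finset.Icc_add_one_left_eq_Ioc]
  exact Finset.sum_Ioc_consecutive g hab hbc

private lemma sum_Icc_sub (g : ℕ → ℝ) {l k : ℕ} (hl : 1 ≤ l) (hlk : l ≤ k) :
    ∑ j ∈ Icc l k, g j = (∑ j ∈ Icc 1 k, g j) - ∑ j ∈ Icc 1 (l-1), g j := by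
  have h := sum_Icc_split g (a := 0) (b := l - 1) (c := k) (by omega) (by omega)
  rw [show l - 1 + 1 = l from by omega] at h
  rw [show (0:ℕ) + 1 = 1 from rfl] at h
  linarith

private lemma sum_telescope_Icc (g : ℕ → ℝ) (l k : ℕ) (h : l ≤ k + 1) :
    ∑ j ∈ Icc l k, (g j - g (j+1)) = g l - g (k+1) := by
  induction k with
  | zero =>
    interval_cases l
    · simp
    · simp
  | succ n ihn =>
    rcases le_or_gt l (n+1) with h1 | h1
    · rw [Finset.sum_Icc_succ_top h1, ihn h1]
      ring
    · have hl : l = n + 2 := by omega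
      subst hl
      rw [Finset.Icc_eq_empty (by omega), Finset.sum_empty]
      norm_num

private lemma mono_chain_le (s : ℕ → ℝ) {a b : ℕ}
    (h : ∀ i, a ≤ i → i < b → s i ≤ s (i+1)) :
    ∀ j, a ≤ j → j ≤ b → s j ≤ s b := by
  have key : ∀ n j, a ≤ j → j + n = b → s j ≤ s b := by
    intro n
    induction n with
    | zero => intro j _ hj; rw [Nat.add_zero] at hj; rw [hj]
    | succ n ihn =>
      intro j hj hjn
      exact le_trans (h j hj (by omega)) (ihn (j+1) (by omega) (by omega))
  intro j hj hjb
  exact key (b - j) j hj (by omega)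

private lemma mono_chain_ge (s : ℕ → ℝ) {a b : ℕ}
    (h : ∀ i, a ≤ i → i < b → s i ≤ s (i+1)) :
    ∀ j, a ≤ j → j ≤ b → s a ≤ s j := by
  intro j hj hjb
  exact mono_chain_le s (a := a) (b := j) (fun i hi hib => h i hi (by omega)) a le_rfl hj

private lemma sum_Icc_shift (g : ℕ → ℝ) {b l r : ℕ} (hl : b ≤ l) (hr : b ≤ r) :
    ∑ j ∈ Icc (l - b) (r - b), g (j + b) = ∑ j ∈ Icc l r, g j := by
  have h := Finset.map_add_right_Icc (l - b) (r - b) b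
  rw [show l - b + b = l from by omega, show r - b + b = r from by omega] at h
  rw [← h, Finset.sum_map]
  rfl

private lemma sum_phitilde (f φ τ : ℕ → ℝ) {l k : ℕ} (hlk : l ≤ k + 1)
    (hf : ∀ j, l ≤ j → j ≤ k → f j ≠ 0) :
    ∑ j ∈ Icc l k, (φ j + τ j / f j - τ (j + 1) / f j) * f j
      = (∑ j ∈ Icc l k, φ j * f j) + (τ l - τ (k + 1)) := by
  have h1 : ∀ j ∈ Icc l k, (φ j + τ j / f j - τ (j + 1) / f j) * f j
      = φ j * f j + (τ j - τ (j + 1)) := by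
    intro j hj
    rw [mem_Icc] at hj
    have hfj := hf j hj.1 hj.2
    have h2 : (φ j + τ j / f j - τ (j+1) / f j) * f j
        = φ j * f j + (τ j / f j) * f j - (τ (j+1) / f j) * f j := by ring
    rw [h2, div_mul_cancel₀ _ hfj, div_mul_cancel₀ _ hfj]
    ring
  rw [Finset.sum_congr rfl h1, Finset.sum_add_distrib, sum_telescope_Icc τ l k hlk]


private def IroningP (K : ℕ) (f φ τ : ℕ → ℝ) : Prop :=
  (∀ k, (k < 2 ∨ K < k) → τ k = 0) ∧
  (∀ k, 0 ≤ τ k) ∧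
  (∀ k, 1 ≤ k → k < K →
    φ k + τ k / f k - τ (k + 1) / f k
      ≤ φ (k + 1) + τ (k + 1) / f (k + 1) - τ (k + 2) / f (k + 1)) ∧
  (∀ l r, 1 ≤ l → r ≤ K → l ≤ r → τ l = 0 → τ (r + 1) = 0 →
    (∀ k, l < k → k ≤ r → 0 < τ k) →
    ∀ k, l ≤ k → k ≤ r →
      φ k + τ k / f k - τ (k + 1) / f k
        = (∑ j ∈ Icc l r, φ j * f j) / (∑ j ∈ Icc l r, f j)) ∧
  (∑ k ∈ Icc 1 K, (φ k + τ k / f k - τ (k + 1) / f k) * f k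
    = ∑ k ∈ Icc 1 K, φ k * f k)

private lemma ironingP_zero (f φ : ℕ → ℝ) : IroningP 0 f φ (fun _ => 0) := by
  refine ⟨fun k _ => rfl, fun k => le_rfl, fun k h1 h2 => by omega,
    fun l r h1 h2 h3 => by omega, by simp⟩

private def Gsum (f φ : ℕ → ℝ) (m : ℕ) : ℝ := ∑ j ∈ Icc 1 m, φ j * f j
private def Fsum (f : ℕ → ℝ) (m : ℕ) : ℝ := ∑ j ∈ Icc 1 m, f j

private lemma Gsum_zero (f φ : ℕ → ℝ) : Gsum f φ 0 = 0 := by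
  rw [Gsum, Finset.Icc_eq_empty (by omega), Finset.sum_empty]

private lemma Fsum_zero (f : ℕ → ℝ) : Fsum f 0 = 0 := by
  rw [Fsum, Finset.Icc_eq_empty (by omega), Finset.sum_empty]

private lemma Gsum_succ (f φ : ℕ → ℝ) (k : ℕ) :
    Gsum f φ (k + 1) = Gsum f φ k + φ (k + 1) * f (k + 1) := by
  rw [Gsum, Gsum]
  exact Finset.sum_Icc_succ_top (by omega) _

private lemma Fsum_succ (f : ℕ → ℝ) (k : ℕ) :
    Fsum f (k + 1) = Fsum f k + f (k + 1) := by
  rw [Fsum, Fsum]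
  exact Finset.sum_Icc_succ_top (by omega) _

private lemma Gsum_Icc (f φ : ℕ → ℝ) {l r : ℕ} (h1 : 1 ≤ l) (h2 : l ≤ r) :
    ∑ j ∈ Icc l r, φ j * f j = Gsum f φ r - Gsum f φ (l - 1) := by
  rw [sum_Icc_sub _ h1 h2]; rfl

private lemma Fsum_Icc (f : ℕ → ℝ) {l r : ℕ} (h1 : 1 ≤ l) (h2 : l ≤ r) :
    ∑ j ∈ Icc l r, f j = Fsum f r - Fsum f (l - 1) := by
  rw [sum_Icc_sub _ h1 h2]; rfl
private lemma ironing_exists (K : ℕ) :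
    ∀ f φ : ℕ → ℝ, (∀ k, 1 ≤ k → k ≤ K → 0 < f k) → ∃ τ, IroningP K f φ τ := by
  induction K using Nat.strong_induction_on with
  | _ K ih =>
  intro f φ hf
  rcases Nat.eq_zero_or_pos K with rfl | hK
  · exact ⟨_, ironingP_zero f φ⟩
  obtain ⟨b, hbmem, hbmin0⟩ := Finset.exists_min_image (Icc 1 K)
    (fun m => Gsum f φ m / Fsum f m) ⟨K, mem_Icc.mpr ⟨hK, le_rfl⟩⟩
  obtain ⟨hb1, hbK⟩ := mem_Icc.mp hbmem
  have hFpos : ∀ m, 1 ≤ m → m ≤ K → 0 < Fsum f m := by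
    intro m h1 h2
    rw [Fsum]
    exact Finset.sum_pos (fun j hj => hf j (mem_Icc.mp hj).1 (le_trans (mem_Icc.mp hj).2 h2))
      ⟨1, mem_Icc.mpr ⟨le_rfl, h1⟩⟩
  set c : ℝ := Gsum f φ b / Fsum f b with hcdef
  have hGb : Gsum f φ b = c * Fsum f b := by
    rw [hcdef, div_mul_cancel₀ _ (ne_of_gt (hFpos b hb1 hbK))]
  have hcle : ∀ m, 1 ≤ m → m ≤ K → c * Fsum f m ≤ Gsum f φ m := by
    intro m h1 h2
    have hp := hFpos m h1 h2
    have h3 : c ≤ Gsum f φ m / Fsum f m := hbmin0 m (mem_Icc.mpr ⟨h1, h2⟩)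
    exact (le_div_iff₀ hp).mp h3
  have hf' : ∀ k, 1 ≤ k → k ≤ K - b → 0 < f (k + b) :=
    fun k h1 h2 => hf (k + b) (by omega) (by omega)
  obtain ⟨τ', hτ'⟩ : ∃ τ', IroningP (K - b) (fun j => f (j + b)) (fun j => φ (j + b)) τ' := by
    rcases lt_or_eq_of_le hbK with hlt | heq
    · exact ih (K - b) (by omega) _ _ hf'
    · rw [show K - b = 0 from by omega]
      exact ⟨_, ironingP_zero _ _⟩
  obtain ⟨hsupp', hnn', hmono', hint', hsum'⟩ := hτ'
  have hmono2 : ∀ k', 1 ≤ k' → k' < K - b →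
      φ (k' + b) + τ' k' / f (k' + b) - τ' (k' + 1) / f (k' + b)
        ≤ φ (k' + 1 + b) + τ' (k' + 1) / f (k' + 1 + b) - τ' (k' + 2) / f (k' + 1 + b) :=
    fun k' h1 h2 => hmono' k' h1 h2
  have hint2 : ∀ l r, 1 ≤ l → r ≤ K - b → l ≤ r → τ' l = 0 → τ' (r + 1) = 0 →
      (∀ k, l < k → k ≤ r → 0 < τ' k) →
      ∀ k, l ≤ k → k ≤ r →
        φ (k + b) + τ' k / f (k + b) - τ' (k + 1) / f (k + b)
          = (∑ j ∈ Icc l r, φ (j + b) * f (j + b)) / (∑ j ∈ Icc l r, f (j + b)) :=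
    fun l r h1 h2 h3 h4 h5 h6 k h7 h8 => hint' l r h1 h2 h3 h4 h5 h6 k h7 h8
  set τ : ℕ → ℝ := fun k =>
    if k ≤ b then (if 2 ≤ k then Gsum f φ (k - 1) - c * Fsum f (k - 1) else 0)
    else τ' (k - b) with hτdef
  have hτ1 : ∀ k, 1 ≤ k → k ≤ b → τ k = Gsum f φ (k - 1) - c * Fsum f (k - 1) := by
    intro k h1 h2
    simp only [hτdef]
    rw [if_pos h2]
    rcases Nat.lt_or_ge k 2 with h | h
    · rw [if_neg (by omega), show k - 1 = 0 from by omega, Gsum_zero, Fsum_zero]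
      ring
    · rw [if_pos h]
  have hτ3 : ∀ k, b < k → τ k = τ' (k - b) := by
    intro k h
    simp only [hτdef]
    rw [if_neg (by omega)]
  have hτ2 : ∀ k, 1 ≤ k → k ≤ b → τ (k + 1) = Gsum f φ k - c * Fsum f k := by
    intro k h1 h2
    rcases lt_or_eq_of_le h2 with h | h
    · rw [hτ1 (k + 1) (by omega) (by omega), Nat.add_sub_cancel]
    · rw [h, hτ3 (b + 1) (by omega), show b + 1 - b = 1 from by omega,
        hsupp' 1 (Or.inl one_lt_two), hGb]
      ring
  have hsupp : ∀ k, (k < 2 ∨ K < k) → τ k = 0 := by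
    intro k hk
    rcases hk with hk | hk
    · simp only [hτdef]
      rw [if_pos (by omega), if_neg (by omega)]
    · rw [hτ3 k (by omega)]
      exact hsupp' (k - b) (Or.inr (by omega))
  have hnn : ∀ k, 0 ≤ τ k := by
    intro k
    rcases Nat.lt_or_ge b k with h | h
    · rw [hτ3 k h]; exact hnn' _
    · rcases Nat.eq_zero_or_pos k with rfl | h1
      · simp only [hτdef]
        rw [if_pos (by omega), if_neg (by omega)]
      · rw [hτ1 k h1 h]
        rcases Nat.lt_or_ge k 2 with h2 | h2
        · rw [show k - 1 = 0 from by omega, Gsum_zero, Fsum_zero]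
          norm_num
        · linarith [hcle (k - 1) (by omega) (by omega)]
  have hA : ∀ k, 1 ≤ k → k ≤ b → φ k + τ k / f k - τ (k + 1) / f k = c := by
    intro k h1 h2
    have hfk : f k ≠ 0 := ne_of_gt (hf k h1 (le_trans h2 hbK))
    have hG : Gsum f φ k = Gsum f φ (k - 1) + φ k * f k := by
      have := Gsum_succ f φ (k - 1); rwa [show k - 1 + 1 = k from by omega] at this
    have hF : Fsum f k = Fsum f (k - 1) + f k := by
      have := Fsum_succ f (k - 1); rwa [show k - 1 + 1 = k from by omega] at this
    have hsub : τ k - τ (k + 1) = (c - φ k) * f k := by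
      rw [hτ1 k h1 h2, hτ2 k h1 h2, hG, hF]; ring
    have hX : τ k / f k - τ (k + 1) / f k = c - φ k := by
      rw [div_sub_div_same, hsub, mul_div_cancel_right₀ _ hfk]
    linarith [hX]
  have hB : ∀ k, b < k → φ k + τ k / f k - τ (k + 1) / f k
      = φ k + τ' (k - b) / f k - τ' (k - b + 1) / f k := by
    intro k h1
    rw [hτ3 k h1, hτ3 (k + 1) (by omega), show k + 1 - b = k - b + 1 from by omega]
  have hmono : ∀ k, 1 ≤ k → k < K →
      φ k + τ k / f k - τ (k + 1) / f k
        ≤ φ (k + 1) + τ (k + 1) / f (k + 1) - τ (k + 2) / f (k + 1) := by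
    intro k h1 h2
    rcases Nat.lt_or_ge k b with hkb | hkb
    · rw [hA k h1 (by omega), hA (k + 1) (by omega) (by omega)]
    rcases lt_or_eq_of_le hkb with hbk | hbk
    · -- b < k
      have e1 := hB k hbk
      have e2 := hB (k + 1) (by omega)
      rw [e1, e2, show k + 1 - b = k - b + 1 from by omega,
        show k - b + 1 + 1 = k - b + 2 from by omega]
      have h3 := hmono2 (k - b) (by omega) (by omega)
      rw [show k - b + 1 + b = k + 1 from by omega, show k - b + b = k from by omega] at h3
      exact h3
    · -- b = k
      rw [hA k h1 (by omega), hB (k + 1) (by omega), show k + 1 - b = 1 from by omega]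
      have hKb1 : 1 ≤ K - b := by omega
      have hSne : ((Icc 1 (K - b)).filter (fun m => τ' (m + 1) = 0)).Nonempty := by
        refine ⟨K - b, ?_⟩
        rw [mem_filter, mem_Icc]
        exact ⟨⟨hKb1, le_rfl⟩, hsupp' (K - b + 1) (Or.inr (by omega))⟩
      set r' := ((Icc 1 (K - b)).filter (fun m => τ' (m + 1) = 0)).min' hSne with hr'def
      have hr'mem := Finset.min'_mem _ hSne
      rw [← hr'def, mem_filter, mem_Icc] at hr'mem
      obtain ⟨⟨hr'1, hr'2⟩, hr'0⟩ := hr'mem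
      have hpos' : ∀ j, 1 < j → j ≤ r' → 0 < τ' j := by
        intro j hj1 hj2
        rcases lt_or_eq_of_le (hnn' j) with h | h
        · exact h
        · exfalso
          have hmem : (j - 1) ∈ (Icc 1 (K - b)).filter (fun m => τ' (m + 1) = 0) := by
            rw [mem_filter, mem_Icc]
            exact ⟨⟨by omega, by omega⟩, by rw [show j - 1 + 1 = j from by omega]; exact h.symm⟩
          have := Finset.min'_le _ _ hmem
          rw [← hr'def] at this
          omega
      have hkey := hint2 1 r' le_rfl hr'2 hr'1 (hsupp' 1 (Or.inl one_lt_two)) hr'0 hpos' 1 le_rfl hr'1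
      rw [show (1:ℕ) + b = k + 1 from by omega] at hkey
      rw [hkey]
      have hDpos : 0 < ∑ j ∈ Icc 1 r', f (j + b) :=
        Finset.sum_pos (fun j hj => hf' j (mem_Icc.mp hj).1 (le_trans (mem_Icc.mp hj).2 hr'2))
          ⟨1, mem_Icc.mpr ⟨le_rfl, hr'1⟩⟩
      rw [le_div_iff₀ hDpos]
      have hN : ∑ j ∈ Icc 1 r', φ (j + b) * f (j + b) = Gsum f φ (b + r') - Gsum f φ b := by
        have h5 : ∑ j ∈ Icc 1 r', φ (j + b) * f (j + b) = ∑ j ∈ Icc (b+1) (b+r'), φ j * f j := by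
          have h6 := sum_Icc_shift (fun j => φ j * f j) (b := b) (l := b + 1) (r := b + r')
            (by omega) (by omega)
          rw [show b + 1 - b = 1 from by omega, show b + r' - b = r' from by omega] at h6
          exact h6
        rw [h5, Gsum_Icc f φ (by omega) (by omega), show b + 1 - 1 = b from by omega]
      have hD : ∑ j ∈ Icc 1 r', f (j + b) = Fsum f (b + r') - Fsum f b := by
        have h5 : ∑ j ∈ Icc 1 r', f (j + b) = ∑ j ∈ Icc (b+1) (b+r'), f j := by
          have h6 := sum_Icc_shift f (b := b) (l := b + 1) (r := b + r') (by omega) (by omega)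
          rw [show b + 1 - b = 1 from by omega, show b + r' - b = r' from by omega] at h6
          exact h6
        rw [h5, Fsum_Icc f (by omega) (by omega), show b + 1 - 1 = b from by omega]
      rw [hN, hD]
      have := hcle (b + r') (by omega) (by omega)
      nlinarith [hGb]
  have hint : ∀ l r, 1 ≤ l → r ≤ K → l ≤ r → τ l = 0 → τ (r + 1) = 0 →
      (∀ j, l < j → j ≤ r → 0 < τ j) → ∀ k, l ≤ k → k ≤ r →
      φ k + τ k / f k - τ (k + 1) / f k
        = (∑ j ∈ Icc l r, φ j * f j) / (∑ j ∈ Icc l r, f j) := by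
    intro l r hl1 hrK hlr hτl hτr hpos k hlk hkr
    rcases le_or_gt r b with hrb | hbr
    · have hGl : (0:ℝ) = Gsum f φ (l - 1) - c * Fsum f (l - 1) := by
        rw [← hτl, hτ1 l hl1 (le_trans hlr hrb)]
      have hGr : (0:ℝ) = Gsum f φ r - c * Fsum f r := by
        rw [← hτr, hτ2 r (by omega) hrb]
      have hdpos : 0 < ∑ j ∈ Icc l r, f j :=
        Finset.sum_pos
          (fun j hj => hf j (le_trans hl1 (mem_Icc.mp hj).1) (le_trans (mem_Icc.mp hj).2 hrK))
          ⟨l, mem_Icc.mpr ⟨le_rfl, hlr⟩⟩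
      rw [hA k (by omega) (le_trans hkr hrb), eq_div_iff (ne_of_gt hdpos),
        Gsum_Icc f φ hl1 hlr, Fsum_Icc f hl1 hlr]
      have e1 : Gsum f φ (l - 1) = c * Fsum f (l - 1) := by linarith
      have e2 : Gsum f φ r = c * Fsum f r := by linarith
      rw [e2, e1]; ring
    rcases le_or_gt l b with hlb | hbl
    · exfalso
      have hp := hpos (b + 1) (by omega) (by omega)
      rw [hτ3 (b + 1) (by omega), show b + 1 - b = 1 from by omega,
        hsupp' 1 (Or.inl one_lt_two)] at hp
      exact lt_irrefl 0 hp
    · have hτl' : τ' (l - b) = 0 := by rw [← hτ3 l hbl]; exact hτl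
      have hτr' : τ' (r - b + 1) = 0 := by
        rw [show r - b + 1 = r + 1 - b from by omega, ← hτ3 (r + 1) (by omega)]
        exact hτr
      have hpos' : ∀ j, l - b < j → j ≤ r - b → 0 < τ' j := by
        intro j h1 h2
        have h3 := hpos (j + b) (by omega) (by omega)
        rwa [hτ3 (j + b) (by omega), show j + b - b = j from by omega] at h3
      have hkey := hint2 (l - b) (r - b) (by omega) (by omega) (by omega) hτl' hτr' hpos'
        (k - b) (by omega) (by omega)
      rw [show k - b + b = k from by omega, show k - b + 1 = k + 1 - b from by omega] at hkey
      rw [hB k (by omega), show k - b + 1 = k + 1 - b from by omega, hkey]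
      congr 1
      · exact sum_Icc_shift (fun j => φ j * f j) (by omega) (by omega)
      · exact sum_Icc_shift f (by omega) (by omega)
  have hwel : ∑ j ∈ Icc 1 K, (φ j + τ j / f j - τ (j + 1) / f j) * f j
      = ∑ j ∈ Icc 1 K, φ j * f j := by
    rw [sum_phitilde f φ τ (by omega) (fun j h1 h2 => ne_of_gt (hf j h1 h2))]
    rw [hsupp 1 (Or.inl one_lt_two), hsupp (K + 1) (Or.inr (by omega))]
    ring
  exact ⟨τ, hsupp, hnn, hmono, hint, hwel⟩
private lemma ironing_le (K : ℕ) (f φ : ℕ → ℝ) (hf : ∀ k, 1 ≤ k → k ≤ K → 0 < f k)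
    (τ τ' : ℕ → ℝ) (hP : IroningP K f φ τ) (hP' : IroningP K f φ τ')
    (m : ℕ) (hm2 : 2 ≤ m) (hmK : m ≤ K) : τ m ≤ τ' m := by
  obtain ⟨hs, hn, hmo, hi, _⟩ := hP
  obtain ⟨hs', hn', hmo', hi', _⟩ := hP'
  rcases eq_or_lt_of_le (hn m) with h0 | h0
  · rw [← h0]; exact hn' m
  by_contra hcon
  push_neg at hcon
  set k := m - 1 with hkdef
  have hm1 : m = k + 1 := by omega
  have hk1 : 1 ≤ k := by omega
  have hkK : k < K := by omega
  rw [hm1] at hcon h0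
  -- the maximal interval [l, r] of positivity of τ around k+1
  have hne1 : ((Icc 1 k).filter (fun j => τ j = 0)).Nonempty := by
    refine ⟨1, ?_⟩
    rw [mem_filter, mem_Icc]
    exact ⟨⟨le_rfl, hk1⟩, hs 1 (Or.inl one_lt_two)⟩
  set l := ((Icc 1 k).filter (fun j => τ j = 0)).max' hne1 with hldef
  have hlmem := Finset.max'_mem _ hne1
  rw [← hldef, mem_filter, mem_Icc] at hlmem
  obtain ⟨⟨hl1, hlk⟩, hlz⟩ := hlmem
  have hlpos : ∀ j, l < j → j ≤ k → 0 < τ j := by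
    intro j h1 h2
    rcases lt_or_eq_of_le (hn j) with h | h
    · exact h
    · exfalso
      have hjmem : j ∈ (Icc 1 k).filter (fun j => τ j = 0) := by
        rw [mem_filter, mem_Icc]; exact ⟨⟨by omega, h2⟩, h.symm⟩
      have := Finset.le_max' _ j hjmem
      rw [← hldef] at this
      omega
  have hne2 : ((Icc (k+1) K).filter (fun j => τ (j+1) = 0)).Nonempty := by
    refine ⟨K, ?_⟩
    rw [mem_filter, mem_Icc]
    exact ⟨⟨by omega, le_rfl⟩, hs (K + 1) (Or.inr (by omega))⟩
  set r := ((Icc (k+1) K).filter (fun j => τ (j+1) = 0)).min' hne2 with hrdef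
  have hrmem := Finset.min'_mem _ hne2
  rw [← hrdef, mem_filter, mem_Icc] at hrmem
  obtain ⟨⟨hrk, hrK⟩, hrz⟩ := hrmem
  have hrpos : ∀ j, k + 1 ≤ j → j ≤ r → 0 < τ j := by
    intro j h1 h2
    rcases eq_or_lt_of_le h1 with h | h
    · rw [← h]; exact h0
    · rcases lt_or_eq_of_le (hn j) with hh | hh
      · exact hh
      · exfalso
        have hjmem : (j - 1) ∈ (Icc (k+1) K).filter (fun j => τ (j+1) = 0) := by
          rw [mem_filter, mem_Icc]
          refine ⟨⟨by omega, by omega⟩, ?_⟩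
          rw [show j - 1 + 1 = j from by omega]
          exact hh.symm
        have := Finset.min'_le _ _ hjmem
        rw [← hrdef] at this
        omega
  have hlr : l ≤ r := by omega
  have hpos : ∀ j, l < j → j ≤ r → 0 < τ j := by
    intro j h1 h2
    rcases le_or_gt j k with h | h
    · exact hlpos j h1 h
    · exact hrpos j (by omega) h2
  have hconst := hi l r hl1 hrK hlr hlz hrz hpos
  set c : ℝ := (∑ j ∈ Icc l r, φ j * f j) / (∑ j ∈ Icc l r, f j) with hcdef
  have hfl : ∀ j, l ≤ j → j ≤ k → f j ≠ 0 :=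
    fun j h1 h2 => ne_of_gt (hf j (by omega) (by omega))
  have hfr : ∀ j, k + 1 ≤ j → j ≤ r → f j ≠ 0 :=
    fun j h1 h2 => ne_of_gt (hf j (by omega) (by omega))
  -- sums of the ironed values of τ over [l,k] and [k+1,r]
  have hE1L : ∑ j ∈ Icc l k, (φ j + τ j / f j - τ (j+1) / f j) * f j
      = c * ∑ j ∈ Icc l k, f j := by
    rw [Finset.mul_sum]
    refine Finset.sum_congr rfl (fun j hj => ?_)
    rw [mem_Icc] at hj
    rw [hconst j hj.1 (by omega)]
  have hE1R := sum_phitilde f φ τ (show l ≤ k + 1 by omega) hfl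
  have hE2L : ∑ j ∈ Icc (k+1) r, (φ j + τ j / f j - τ (j+1) / f j) * f j
      = c * ∑ j ∈ Icc (k+1) r, f j := by
    rw [Finset.mul_sum]
    refine Finset.sum_congr rfl (fun j hj => ?_)
    rw [mem_Icc] at hj
    rw [hconst j (by omega) hj.2]
  have hE2R := sum_phitilde f φ τ (show k + 1 ≤ r + 1 by omega) hfr
  have hT1 := sum_phitilde f φ τ' (show l ≤ k + 1 by omega) hfl
  have hT2 := sum_phitilde f φ τ' (show k + 1 ≤ r + 1 by omega) hfr
  -- monotone chains for the ironed values of τ'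
  have hadj1 : ∀ i, l ≤ i → i < k →
      φ i + τ' i / f i - τ' (i+1) / f i
        ≤ φ (i+1) + τ' (i+1) / f (i+1) - τ' (i+2) / f (i+1) :=
    fun i ha hb => hmo' i (by omega) (by omega)
  have hchain1 : ∀ j, l ≤ j → j ≤ k →
      φ j + τ' j / f j - τ' (j+1) / f j ≤ φ k + τ' k / f k - τ' (k+1) / f k :=
    fun j h1 h2 =>
      mono_chain_le (fun i => φ i + τ' i / f i - τ' (i+1) / f i) hadj1 j h1 h2
  have hadj2 : ∀ i, k + 1 ≤ i → i < r →
      φ i + τ' i / f i - τ' (i+1) / f i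
        ≤ φ (i+1) + τ' (i+1) / f (i+1) - τ' (i+2) / f (i+1) :=
    fun i ha hb => hmo' i (by omega) (by omega)
  have hchain2 : ∀ j, k + 1 ≤ j → j ≤ r →
      φ (k+1) + τ' (k+1) / f (k+1) - τ' (k+2) / f (k+1)
        ≤ φ j + τ' j / f j - τ' (j+1) / f j :=
    fun j h1 h2 =>
      mono_chain_ge (fun i => φ i + τ' i / f i - τ' (i+1) / f i) hadj2 j h1 h2
  have hS1pos : 0 < ∑ j ∈ Icc l k, f j := by
    refine Finset.sum_pos (fun j hj => ?_) ⟨l, mem_Icc.mpr ⟨le_rfl, hlk⟩⟩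
    rw [mem_Icc] at hj
    exact hf j (by omega) (by omega)
  have hS2pos : 0 < ∑ j ∈ Icc (k+1) r, f j := by
    refine Finset.sum_pos (fun j hj => ?_) ⟨k + 1, mem_Icc.mpr ⟨le_rfl, hrk⟩⟩
    rw [mem_Icc] at hj
    exact hf j (by omega) (by omega)
  have hup1 : ∑ j ∈ Icc l k, (φ j + τ' j / f j - τ' (j+1) / f j) * f j
      ≤ (φ k + τ' k / f k - τ' (k+1) / f k) * ∑ j ∈ Icc l k, f j := by
    rw [Finset.mul_sum]
    refine Finset.sum_le_sum (fun j hj => ?_)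
    rw [mem_Icc] at hj
    exact mul_le_mul_of_nonneg_right (hchain1 j hj.1 hj.2)
      (le_of_lt (hf j (by omega) (by omega)))
  have hdown2 : (φ (k+1) + τ' (k+1) / f (k+1) - τ' (k+2) / f (k+1)) * ∑ j ∈ Icc (k+1) r, f j
      ≤ ∑ j ∈ Icc (k+1) r, (φ j + τ' j / f j - τ' (j+1) / f j) * f j := by
    rw [Finset.mul_sum]
    refine Finset.sum_le_sum (fun j hj => ?_)
    rw [mem_Icc] at hj
    exact mul_le_mul_of_nonneg_right (hchain2 j hj.1 hj.2)
      (le_of_lt (hf j (by omega) (by omega)))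
  have hsk_gt : c < φ k + τ' k / f k - τ' (k+1) / f k := by
    have h1 : c * (∑ j ∈ Icc l k, f j)
        < (φ k + τ' k / f k - τ' (k+1) / f k) * ∑ j ∈ Icc l k, f j := by
      linarith [hE1L, hE1R, hT1, hup1, hn' l, hcon, hlz]
    exact lt_of_mul_lt_mul_right h1 hS1pos.le
  have hsk1_lt : φ (k+1) + τ' (k+1) / f (k+1) - τ' (k+2) / f (k+1) < c := by
    have h2 : (φ (k+1) + τ' (k+1) / f (k+1) - τ' (k+2) / f (k+1)) * ∑ j ∈ Icc (k+1) r, f j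
        < c * ∑ j ∈ Icc (k+1) r, f j := by
      linarith [hdown2, hT2, hE2L, hE2R, hn' (r+1), hcon, hrz]
    exact lt_of_mul_lt_mul_right h2 hS2pos.le
  have hfin := hmo' k hk1 hkK
  linarith

private lemma ironing_unique (K : ℕ) (f φ : ℕ → ℝ)
    (hf : ∀ k, 1 ≤ k → k ≤ K → 0 < f k)
    {τ τ' : ℕ → ℝ} (hP : IroningP K f φ τ) (hP' : IroningP K f φ τ') : τ = τ' := by
  funext m
  rcases lt_or_ge m 2 with h | h
  · rw [hP.1 m (Or.inl h), hP'.1 m (Or.inl h)]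
  rcases lt_or_ge K m with h2 | h2
  · rw [hP.1 m (Or.inr h2), hP'.1 m (Or.inr h2)]
  exact le_antisymm (ironing_le K f φ hf τ τ' hP hP' m h h2)
    (ironing_le K f φ hf τ' τ hP' hP m h h2)

/-- ironing.  There exist unique nonnegative dual values
`τ(2),…,τ(K)` (with `τ(1) = τ(K+1) = 0`, and `τ` vanishing outside `[2,K]`)
such that the ironed virtual values `φ̃(k) = φ(k) + τ(k)/f(k) − τ(k+1)/f(k)`
are non-decreasing, are constant and equal to the `f`-weighted average of `φ`
on every maximal interval `[l,r]` on which the intermediate `τ`'s are positive,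
and preserve the expected virtual welfare. -/
theorem ironing_exists_unique
    (K : ℕ) (hK : 1 ≤ K) (v : ℕ → ℝ)
    (hv : ∀ k, 1 ≤ k → k < K → v k < v (k + 1)) (hv0 : ∀ k, 1 ≤ k → k ≤ K → 0 ≤ v k)
    (f : ℕ → ℝ) (hf : ∀ k, 1 ≤ k → k ≤ K → 0 < f k) (hf1 : ∑ k ∈ Icc 1 K, f k = 1)
    (F : ℕ → ℝ) (hF : ∀ k, F k = ∑ j ∈ Icc 1 k, f j)
    (φ : ℕ → ℝ)
    (hφ : ∀ k, 1 ≤ k → k < K → φ k = v k - (v (k + 1) - v k) * (1 - F k) / f k)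
    (hφK : φ K = v K) :
    ∃! τ : ℕ → ℝ,
      (∀ k, (k < 2 ∨ K < k) → τ k = 0) ∧
      (∀ k, 0 ≤ τ k) ∧
      -- the ironed virtual values are non-decreasing
      (∀ k, 1 ≤ k → k < K →
        φ k + τ k / f k - τ (k + 1) / f k
          ≤ φ (k + 1) + τ (k + 1) / f (k + 1) - τ (k + 2) / f (k + 1)) ∧
      -- on every maximal interval of positive τ's, φ̃ is constant and equals
      -- the f-weighted average of φ on the interval
      (∀ l r, 1 ≤ l → r ≤ K → l ≤ r → τ l = 0 → τ (r + 1) = 0 →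
        (∀ k, l < k → k ≤ r → 0 < τ k) →
        ∀ k, l ≤ k → k ≤ r →
          φ k + τ k / f k - τ (k + 1) / f k
            = (∑ j ∈ Icc l r, φ j * f j) / (∑ j ∈ Icc l r, f j)) ∧
      -- expected virtual welfare is preserved
      (∑ k ∈ Icc 1 K, (φ k + τ k / f k - τ (k + 1) / f k) * f k
        = ∑ k ∈ Icc 1 K, φ k * f k) := by
  obtain ⟨τ, hτ⟩ := ironing_exists K f φ hf
  exact ⟨τ, hτ, fun τ' hτ' => ironing_unique K f φ hf hτ' hτ⟩
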